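/- arXiv:1807.00838 — 5 statements merged into one kernel-verified Lean document; each statement's English description precedes it below -/
import Mathlib

section
/- Let Λ = (Λ_1, …, Λ_n) in ℂ^m be admissible with n > 2m. Then the (m+1) × n complex matrix whose i-th column is (Λ_i, 1) ∈ ℂ^{m+1} has rank m+1. Equivalently, the points Λ_1, …, Λ_n affinely span ℂ^m. -/
open Module

theorem stmt_5 (m n : ℕ) (hn : 2 * m < n) (Λ : Fin n → (Fin m → ℂ))
    (hSiegel : (0 : Fin m → ℂ) ∈ convexHull ℝ (Set.range Λ))
    (hWH : ∀ J : Finset (Fin n), J.card ≤ 2 * m →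
      (0 : Fin m → ℂ) ∉ convexHull ℝ (Λ '' J)) :
    (Matrix.of fun (r : Fin (m + 1)) (c : Fin n) =>
      if h : (r : ℕ) < m then Λ c ⟨r, h⟩ else 1).rank = m + 1 := by
  classical
  set M : Matrix (Fin (m + 1)) (Fin n) ℂ :=
    Matrix.of fun (r : Fin (m + 1)) (c : Fin n) =>
      if h : (r : ℕ) < m then Λ c ⟨r, h⟩ else 1 with hM
  have hLI : LinearIndependent ℂ M := by
    refine Fintype.linearIndependent_iff.mpr ?_
    intro g hg
    -- the linear functional determined by the first m coefficients of g
    set f : (Fin m → ℂ) →ₗ[ℂ] ℂ := ∑ j : Fin m, g j.castSucc • LinearMap.proj j with hf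
    have hfapp : ∀ x : Fin m → ℂ, f x = ∑ j : Fin m, g j.castSucc * x j := by
      intro x
      simp [hf, LinearMap.sum_apply, LinearMap.smul_apply, LinearMap.proj_apply, smul_eq_mul]
    have hcol : ∀ c : Fin n, f (Λ c) + g (Fin.last m) = 0 := by
      intro c
      have h1 := congrFun hg c
      simp only [Finset.sum_apply, Pi.smul_apply, Pi.zero_apply, smul_eq_mul] at h1
      rw [Fin.sum_univ_castSucc] at h1
      have h2 : ∀ j : Fin m, M j.castSucc c = Λ c j := by
        intro j
        simp [hM, Matrix.of_apply, Fin.coe_castSucc, j.isLt]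
      have h3 : M (Fin.last m) c = 1 := by
        simp [hM, Matrix.of_apply]
      rw [h3] at h1
      simp only [h2] at h1
      rw [hfapp]
      simpa using h1
    set fr : (Fin m → ℂ) →ₗ[ℝ] ℂ := f.restrictScalars ℝ with hfr
    -- g at the last coordinate vanishes
    have hhull : convexHull ℝ (Set.range Λ) ⊆ fr ⁻¹' {-g (Fin.last m)} := by
      apply convexHull_min
      · rintro x ⟨c, rfl⟩
        simp only [Set.mem_preimage, Set.mem_singleton_iff, hfr,
          LinearMap.restrictScalars_apply]
        have := hcol c
        linear_combination this
      · exact (convex_singleton _).linear_preimage fr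
    have hglast : g (Fin.last m) = 0 := by
      have h0 := hhull hSiegel
      simp only [Set.mem_preimage, Set.mem_singleton_iff, map_zero] at h0
      exact neg_eq_zero.mp h0.symm
    have hfΛ : ∀ c : Fin n, fr (Λ c) = 0 := by
      intro c
      have := hcol c
      rw [hglast] at this
      simpa [hfr] using this
    intro i
    by_contra hgi
    -- f is a nonzero complex-linear functional
    have hiv : (i : ℕ) < m := by
      rcases lt_or_eq_of_le (Nat.lt_succ_iff.mp i.isLt) with h | h
      · exact h
      · exfalso; apply hgi
        have : i = Fin.last m := Fin.ext h
        rw [this]; exact hglast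
    have hfne : f ≠ 0 := by
      intro hzero
      apply hgi
      have := congrArg (fun (φ : (Fin m → ℂ) →ₗ[ℂ] ℂ) => φ (Pi.single ⟨i, hiv⟩ 1)) hzero
      simp only [LinearMap.zero_apply] at this
      rw [hfapp] at this
      rw [Finset.sum_eq_single (⟨i, hiv⟩ : Fin m)] at this
      · simp only [Pi.single_eq_same, mul_one] at this
        have hi : (⟨i, hiv⟩ : Fin m).castSucc = i := Fin.ext rfl
        rwa [hi] at this
      · intro j _ hj
        rw [Pi.single_eq_of_ne (by simpa using hj)]; ring
      · intro h; exact absurd (Finset.mem_univ _) h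
    -- f, hence fr, is surjective
    have hfsurj : Function.Surjective fr := by
      obtain ⟨x, hx⟩ : ∃ x, f x ≠ 0 := by
        by_contra h
        push_neg at h
        exact hfne (LinearMap.ext fun x => h x)
      intro c
      refine ⟨(c / f x) • x, ?_⟩
      simp only [hfr, LinearMap.restrictScalars_apply, map_smul, smul_eq_mul]
      field_simp
    -- rank-nullity: the kernel of fr has real dimension 2m - 2
    have hrange : finrank ℝ (LinearMap.range fr) = 2 := by
      rw [LinearMap.range_eq_top.mpr hfsurj, finrank_top, Complex.finrank_real_complex]
    have hdom : finrank ℝ (Fin m → ℂ) = 2 * m := by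
      rw [finrank_pi_fintype]
      simp [Complex.finrank_real_complex, Finset.sum_const]
      ring
    have hrn := LinearMap.finrank_range_add_finrank_ker fr
    rw [hrange, hdom] at hrn
    -- Caratheodory
    rw [convexHull_eq_union] at hSiegel
    simp only [Set.mem_iUnion] at hSiegel
    obtain ⟨t, hts, hai, h0t⟩ := hSiegel
    have htne : t.Nonempty := by
      by_contra h
      rw [Finset.not_nonempty_iff_eq_empty] at h
      simp [h] at h0t
    have : Nonempty { x // x ∈ t } := ⟨⟨htne.choose, htne.choose_spec⟩⟩
    have hcard := hai.finrank_vectorSpan_add_one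
    rw [Fintype.card_coe] at hcard
    have hvs : vectorSpan ℝ (Set.range ((↑) : { x // x ∈ t } → (Fin m → ℂ))) ≤
        LinearMap.ker fr := by
      rw [vectorSpan_def]
      rw [Submodule.span_le]
      rintro v ⟨x, hx, y, hy, rfl⟩
      simp only [Set.mem_range] at hx hy
      obtain ⟨⟨x, hxt⟩, rfl⟩ := hx
      obtain ⟨⟨y, hyt⟩, rfl⟩ := hy
      obtain ⟨cx, hcx⟩ := hts hxt
      obtain ⟨cy, hcy⟩ := hts hyt
      have hxk : fr x = 0 := by rw [← hcx]; exact hfΛ cx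
      have hyk : fr y = 0 := by rw [← hcy]; exact hfΛ cy
      simp only [SetLike.mem_coe, LinearMap.mem_ker, vsub_eq_sub, map_sub, hxk, hyk, sub_zero]
    have hle := Submodule.finrank_mono hvs
    have htcard : t.card ≤ 2 * m := by omega
    -- build the index set J
    have hne : (0 : ℕ) < n := by omega
    set φ : (Fin m → ℂ) → Fin n := fun x =>
      if h : x ∈ Set.range Λ then h.choose else ⟨0, hne⟩ with hφ
    set J : Finset (Fin n) := t.image φ with hJ
    have hJcard : J.card ≤ 2 * m := le_trans (Finset.card_image_le) htcard
    apply hWH J hJcard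
    have htJ : (↑t : Set (Fin m → ℂ)) ⊆ Λ '' ↑J := by
      intro x hxt
      have hxr : x ∈ Set.range Λ := hts hxt
      refine ⟨φ x, ?_, ?_⟩
      · exact Finset.mem_image_of_mem φ hxt
      · simp only [hφ, dif_pos hxr]
        exact hxr.choose_spec
    exact convexHull_mono htJ h0t
  have := hLI.rank_matrix
  simpa using this
end

section
/- Let Λ = (Λ_1, …, Λ_n) in ℂ^m satisfy weak hyperbolicity, and let J ⊆ {1,…,n} be such that 0 lies in the convex hull of {Λ_j : j ∈ J}. Then the complex rank of the matrix whose columns are the vectors (Λ_j, 1) ∈ ℂ^{m+1} for j ∈ J is equal to m+1. -/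
theorem stmt_6 (m n : ℕ) (Λ : Fin n → (Fin m → ℂ))
    (hWH : ∀ J : Finset (Fin n), J.card ≤ 2 * m →
      (0 : Fin m → ℂ) ∉ convexHull ℝ (Λ '' J))
    (J : Finset (Fin n))
    (hJ : (0 : Fin m → ℂ) ∈ convexHull ℝ (Λ '' J)) :
    (Matrix.of fun (r : Fin (m + 1)) (c : J) =>
      if h : (r : ℕ) < m then Λ c ⟨r, h⟩ else 1).rank = m + 1 := by
  classical
  set M : Matrix (Fin (m + 1)) J ℂ :=
    Matrix.of fun (r : Fin (m + 1)) (c : J) =>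
      if h : (r : ℕ) < m then Λ c ⟨r, h⟩ else 1 with hMdef
  -- representation of 0 as a positive affinely independent combination
  obtain ⟨ι, hι, z, w, hzs, hai, hw0, hw1, hsum⟩ :=
    eq_pos_convex_span_of_mem_convexHull hJ
  have hli : LinearIndependent ℂ M := by
    refine Fintype.linearIndependent_iff.mpr ?_
    intro v hv
    -- the ℝ-linear functional given by the first m coefficients of v
    set φ : (Fin m → ℂ) →ₗ[ℝ] ℂ :=
      { toFun := fun x => ∑ r : Fin m, v r.castSucc * x r
        map_add' := by
          intro a b
          simp [mul_add, Finset.sum_add_distrib]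
        map_smul' := by
          intro a x
          simp only [Pi.smul_apply, Complex.real_smul, RingHom.id_apply, Finset.mul_sum]
          exact Finset.sum_congr rfl fun r _ => by ring } with hφdef
    have hφapp : ∀ x : Fin m → ℂ, φ x = ∑ r : Fin m, v r.castSucc * x r := fun x => rfl
    -- the basic relation coming from hv
    have key : ∀ j : Fin n, j ∈ J → φ (Λ j) + v (Fin.last m) = 0 := by
      intro j hj
      have h1 := congrFun hv ⟨j, hj⟩
      rw [Finset.sum_apply] at h1
      simp only [Pi.smul_apply, smul_eq_mul, Pi.zero_apply] at h1
      rw [Fin.sum_univ_castSucc] at h1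
      have h2 : ∀ r : Fin m, M r.castSucc ⟨j, hj⟩ = Λ j r := by
        intro r
        simp only [hMdef, Matrix.of_apply, Fin.coe_castSucc]
        rw [dif_pos r.isLt]
      have h3 : M (Fin.last m) ⟨j, hj⟩ = 1 := by
        simp only [hMdef, Matrix.of_apply, Fin.val_last]
        rw [dif_neg (lt_irrefl m)]
      rw [h3] at h1
      rw [hφapp, ← h1, mul_one]
      congr 1
      exact Finset.sum_congr rfl fun r _ => by rw [h2]
    have hzval : ∀ i : ι, φ (z i) = -v (Fin.last m) := by
      intro i
      obtain ⟨j, hjJ, hj⟩ := hzs (Set.mem_range_self i)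
      have h := key j hjJ
      rw [hj] at h
      exact eq_neg_of_add_eq_zero_left h
    -- applying φ to the convex combination kills the last coordinate
    have hlast : v (Fin.last m) = 0 := by
      have h0 : φ (∑ i, w i • z i) = 0 := by rw [hsum]; exact map_zero φ
      rw [map_sum] at h0
      simp only [map_smul, hzval] at h0
      rw [← Finset.sum_smul, hw1, one_smul] at h0
      simpa using h0
    have hz0 : ∀ i : ι, φ (z i) = 0 := by
      intro i; rw [hzval i, hlast, neg_zero]
    -- now the first m coordinates vanish
    have hcast : ∀ r : Fin m, v r.castSucc = 0 := by
      by_contra hcon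
      push_neg at hcon
      obtain ⟨r₀, hr₀⟩ := hcon
      set K : Submodule ℝ (Fin m → ℂ) := LinearMap.ker φ with hKdef
      have hKne : K ≠ ⊤ := by
        intro htop
        have hmem : (Pi.single r₀ (1 : ℂ) : Fin m → ℂ) ∈ K := htop ▸ Submodule.mem_top
        rw [hKdef, LinearMap.mem_ker, hφapp] at hmem
        apply hr₀
        rw [← hmem]
        rw [Finset.sum_eq_single r₀]
        · simp
        · intro b _ hb; simp [Pi.single_apply, hb]
        · simp
      have hfinK : Module.finrank ℝ K < 2 * m := by
        have h1 : Module.finrank ℝ K < Module.finrank ℝ (Fin m → ℂ) :=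
          Submodule.finrank_lt hKne
        have h2 : Module.finrank ℝ (Fin m → ℂ) = 2 * m := by
          rw [Module.finrank_pi_fintype]
          simp [Complex.finrank_real_complex, mul_comm]
        rwa [h2] at h1
      have hvs : vectorSpan ℝ (Set.range z) ≤ K := by
        rw [vectorSpan_def]
        rw [Submodule.span_le]
        rintro x hx
        rw [Set.mem_vsub] at hx
        obtain ⟨a, ha, b, hb, rfl⟩ := hx
        obtain ⟨i, rfl⟩ := ha
        obtain ⟨i', rfl⟩ := hb
        have hai : z i ∈ K := by rw [hKdef, LinearMap.mem_ker]; exact hz0 i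
        have hbi : z i' ∈ K := by rw [hKdef, LinearMap.mem_ker]; exact hz0 i'
        exact sub_mem hai hbi
      have hcard : Fintype.card ι ≤ 2 * m := by
        have h1 := hai.card_le_finrank_succ
        have h2 : Module.finrank ℝ (vectorSpan ℝ (Set.range z)) ≤ Module.finrank ℝ K :=
          Submodule.finrank_mono hvs
        have h3 : Module.finrank ℝ K + 1 ≤ 2 * m := hfinK
        omega
      -- choose indices realizing the points z i
      have hch : ∀ i : ι, ∃ j : Fin n, j ∈ J ∧ Λ j = z i := by
        intro i
        obtain ⟨j, hjJ, hj⟩ := hzs (Set.mem_range_self i)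
        exact ⟨j, hjJ, hj⟩
      choose g hgJ hgz using hch
      set J' : Finset (Fin n) := Finset.image g Finset.univ with hJ'def
      have hJ'card : J'.card ≤ 2 * m := by
        calc J'.card ≤ Finset.univ.card := Finset.card_image_le
        _ = Fintype.card ι := Finset.card_univ
        _ ≤ 2 * m := hcard
      apply hWH J' hJ'card
      have hmem : Finset.univ.centerMass w (fun i => Λ (g i)) ∈
          convexHull ℝ (Λ '' (J' : Set (Fin n))) := by
        apply Finset.centerMass_mem_convexHull
        · intro i _; exact (hw0 i).le
        · rw [hw1]; exact one_pos
        · intro i _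
          exact ⟨g i, Finset.mem_coe.mpr (Finset.mem_image_of_mem g (Finset.mem_univ i)), rfl⟩
      have hcm : Finset.univ.centerMass w (fun i => Λ (g i)) = 0 := by
        rw [Finset.centerMass_eq_of_sum_1 _ _ hw1]
        rw [← hsum]
        exact Finset.sum_congr rfl fun i _ => by rw [hgz]
      rwa [hcm] at hmem
    intro i
    refine Fin.lastCases ?_ ?_ i
    · exact hlast
    · exact hcast
  rw [hli.rank_matrix, Fintype.card_fin]
end

section
/- Let Λ = (Λ_1, …, Λ_n) in ℂ^m be admissible with n > 2m. Then the affine hull of K_Λ = {r ∈ ℝ^n : r ≥ 0, ∑ r_i Λ_i = 0, ∑ r_i = 1} has dimension n − 2m − 1; that is, K_Λ is a convex polytope of dimension n − 2m − 1. -/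
open Module

/-- The linear map `r ↦ (∑ rᵢ • Λᵢ, ∑ rᵢ)`. -/
noncomputable def auxL (m n : ℕ) (Λ : Fin n → (Fin m → ℂ)) :
    (Fin n → ℝ) →ₗ[ℝ] (Fin m → ℂ) × ℝ where
  toFun v := (∑ i, v i • Λ i, ∑ i, v i)
  map_add' v u := by
    simp [add_smul, Finset.sum_add_distrib, Prod.ext_iff]
  map_smul' c v := by
    simp [Prod.ext_iff, mul_smul, ← Finset.smul_sum, ← Finset.mul_sum]

theorem auxL_apply (m n : ℕ) (Λ : Fin n → (Fin m → ℂ)) (v : Fin n → ℝ) :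
    auxL m n Λ v = (∑ i, v i • Λ i, ∑ i, v i) := rfl

theorem aux_finrank (m : ℕ) : finrank ℝ (Fin m → ℂ) = 2 * m := by
  rw [Module.finrank_pi_fintype]
  simp [Complex.finrank_real_complex]
  ring

set_option maxHeartbeats 2000000 in
theorem stmt_8 (m n : ℕ) (hn : 2 * m < n) (Λ : Fin n → (Fin m → ℂ))
    (hSiegel : (0 : Fin m → ℂ) ∈ convexHull ℝ (Set.range Λ))
    (hWH : ∀ J : Finset (Fin n), J.card ≤ 2 * m →
      (0 : Fin m → ℂ) ∉ convexHull ℝ (Λ '' J)) :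
    Module.finrank ℝ (vectorSpan ℝ
      {r : Fin n → ℝ | (∀ i, 0 ≤ r i) ∧ ∑ i, r i • Λ i = 0 ∧ ∑ i, r i = 1}) =
      n - 2 * m - 1 := by
  classical
  have hn0 : 0 < n := lt_of_le_of_lt (Nat.zero_le _) hn
  haveI : Nonempty (Fin n) := ⟨⟨0, hn0⟩⟩
  set K : Set (Fin n → ℝ) :=
    {r : Fin n → ℝ | (∀ i, 0 ≤ r i) ∧ ∑ i, r i • Λ i = 0 ∧ ∑ i, r i = 1} with hKdef
  have hfr : finrank ℝ (Fin m → ℂ) = 2 * m := aux_finrank m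
  -- Any nonnegative combination of the `Λ i` representing `0` has large support.
  have hbig : ∀ (ι : Type) (_ : Fintype ι) (z : ι → (Fin m → ℂ)) (w : ι → ℝ),
      Set.range z ⊆ Set.range Λ → (∀ i, 0 ≤ w i) → ∑ i, w i = 1 →
      ∑ i, w i • z i = 0 → 2 * m < Fintype.card ι := by
    intro ι _ z w hzs hw0 hw1 hw2
    by_contra hle
    push_neg at hle
    have hch : ∀ i, ∃ j, Λ j = z i := fun i => hzs ⟨i, rfl⟩
    choose p hp using hch
    refine hWH (Finset.univ.image p) ?_ ?_
    · exact le_trans Finset.card_image_le (by simpa using hle)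
    · have h0 : (0 : Fin m → ℂ) = Finset.univ.centerMass w z := by
        rw [Finset.centerMass_eq_of_sum_1 _ _ hw1, hw2]
      rw [h0]
      refine Finset.centerMass_mem_convexHull _ (fun i _ => hw0 i)
        (by rw [hw1]; norm_num) ?_
      intro i _
      exact ⟨p i, by simp, hp i⟩
  -- Carathéodory: positive affinely independent representation of `0`.
  obtain ⟨ι, hι, z, w, hzs, hzi, hwpos, hw1, hw0⟩ :=
    eq_pos_convex_span_of_mem_convexHull hSiegel
  have hne : Nonempty ι := by
    rcases isEmpty_or_nonempty ι with h | h
    · rw [Finset.univ_eq_empty, Finset.sum_empty] at hw1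
      exact absurd hw1 (by norm_num)
    · exact h
  have hcard2 : Fintype.card ι = 2 * m + 1 := by
    have hlt : 2 * m < Fintype.card ι :=
      hbig ι hι z w hzs (fun i => (hwpos i).le) hw1 hw0
    obtain ⟨c, hc⟩ : ∃ c, Fintype.card ι = c + 1 :=
      ⟨Fintype.card ι - 1, (Nat.succ_pred_eq_of_pos Fintype.card_pos).symm⟩
    have h1 := hzi.finrank_vectorSpan hc
    have h2 := Submodule.finrank_le (vectorSpan ℝ (Set.range z))
    rw [hfr] at h2
    omega
  have htop : affineSpan ℝ (Set.range z) = ⊤ :=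
    hzi.affineSpan_eq_top_iff_card_eq_finrank_add_one.2 (by rw [hcard2, hfr])
  -- `0` lies in the interior of the convex hull.
  let b : AffineBasis ι ℝ (Fin m → ℂ) := ⟨z, hzi, htop⟩
  have hbz : ⇑b = z := rfl
  have h0mem : (0 : Fin m → ℂ) ∈ interior (convexHull ℝ (Set.range Λ)) := by
    have h0t : (0 : Fin m → ℂ) ∈ interior (convexHull ℝ (Set.range ⇑b)) := by
      rw [b.interior_convexHull]
      intro i
      have hcomb : (Finset.univ.affineCombination ℝ ⇑b w : Fin m → ℂ) = 0 := by
        rw [hbz, Finset.affineCombination_eq_linear_combination _ _ _ hw1, hw0]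
      have hco := b.coord_apply_combination_of_mem (Finset.mem_univ i) hw1
      rw [hcomb] at hco
      show 0 < b.coord i 0
      rw [hco]
      exact hwpos i
    exact interior_mono (convexHull_mono (by rw [hbz]; exact hzs)) h0t
  -- representation lemma
  have hrepr : ∀ x ∈ convexHull ℝ (Set.range Λ),
      ∃ w : Fin n → ℝ, (∀ i, 0 ≤ w i) ∧ ∑ i, w i = 1 ∧ ∑ i, w i • Λ i = x := by
    intro x hx
    rw [convexHull_range_eq_exists_affineCombination] at hx
    obtain ⟨s, ws, hws0, hws1, hx⟩ := hx
    refine ⟨fun i => if i ∈ s then ws i else 0, fun i => ?_, ?_, ?_⟩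
    · show (0:ℝ) ≤ if i ∈ s then ws i else 0
      split_ifs with h
      · exact hws0 i h
      · exact le_refl _
    · rw [Finset.sum_ite_mem, Finset.univ_inter]
      exact hws1
    · show ∑ i, (if i ∈ s then ws i else 0) • Λ i = x
      have h1 : ∑ i, (if i ∈ s then ws i else 0) • Λ i = ∑ i ∈ s, ws i • Λ i := by
        calc ∑ i, (if i ∈ s then ws i else 0) • Λ i
            = ∑ i, (if i ∈ s then ws i • Λ i else 0) :=
              Finset.sum_congr rfl fun i _ => by split_ifs <;> simp
          _ = ∑ i ∈ s, ws i • Λ i := by rw [Finset.sum_ite_mem, Finset.univ_inter]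
      rw [h1, ← Finset.affineCombination_eq_linear_combination s Λ ws hws1, hx]
  -- points of K with a prescribed positive coordinate
  have hPj : ∀ j : Fin n, ∃ w : Fin n → ℝ,
      (∀ i, 0 ≤ w i) ∧ ∑ i, w i = 1 ∧ ∑ i, w i • Λ i = 0 ∧ 0 < w j := by
    intro j
    have hC : convexHull ℝ (Set.range Λ) ∈ nhds (0 : Fin m → ℂ) :=
      mem_interior_iff_mem_nhds.1 h0mem
    have hcont : Filter.Tendsto (fun ε : ℝ => (-ε) • Λ j)
        (nhdsWithin 0 (Set.Ioi 0)) (nhds 0) := by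
      have h1 : Filter.Tendsto (fun ε : ℝ => (-ε) • Λ j) (nhds 0)
          (nhds ((-(0 : ℝ)) • Λ j)) :=
        ((continuous_id.neg).smul continuous_const).tendsto 0
      simpa using h1.mono_left nhdsWithin_le_nhds
    have hev : ∀ᶠ ε : ℝ in nhdsWithin 0 (Set.Ioi 0),
        (-ε) • Λ j ∈ convexHull ℝ (Set.range Λ) := hcont.eventually_mem hC
    obtain ⟨ε, hmemC, hεpos⟩ := (hev.and self_mem_nhdsWithin).exists
    have hε : (0 : ℝ) < ε := hεpos
    have h1ε : (0 : ℝ) < 1 + ε := by linarith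
    obtain ⟨s, hs0, hs1, hs2⟩ := hrepr _ hmemC
    refine ⟨fun i => (1 + ε)⁻¹ * (s i + if i = j then ε else 0), fun i => ?_, ?_, ?_, ?_⟩
    · have := hs0 i
      apply mul_nonneg (le_of_lt (inv_pos.2 h1ε))
      split_ifs with h
      · linarith
      · linarith
    · rw [← Finset.mul_sum, Finset.sum_add_distrib, hs1,
        Finset.sum_ite_eq' Finset.univ j (fun _ => ε)]
      simp only [Finset.mem_univ, if_true]
      field_simp
    · have h2 : ∑ i, ((1 + ε)⁻¹ * (s i + if i = j then ε else 0)) • Λ i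
          = (1 + ε)⁻¹ • (∑ i, s i • Λ i + ∑ i, (if i = j then ε else 0) • Λ i) := by
        rw [smul_add, Finset.smul_sum, Finset.smul_sum, ← Finset.sum_add_distrib]
        refine Finset.sum_congr rfl fun i _ => ?_
        rw [← smul_add, ← add_smul, smul_smul]
      rw [h2, hs2]
      have h3 : ∑ i, (if i = j then ε else 0) • Λ i = ε • Λ j := by
        calc ∑ i, (if i = j then ε else 0) • Λ i
            = ∑ i, (if i = j then ε • Λ i else 0) :=
              Finset.sum_congr rfl fun i _ => by split_ifs <;> simp
          _ = ε • Λ j := by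
              rw [Finset.sum_ite_eq' Finset.univ j (fun i => ε • Λ i)]
              simp
      rw [h3, neg_smul, neg_add_cancel, smul_zero]
    · simp only [if_pos rfl]
      have := hs0 j
      have : (0 : ℝ) < s j + ε := by linarith
      positivity
  choose W hW0 hW1 hW2 hW3 using hPj
  -- the strictly positive point of K
  obtain ⟨r, hrdef⟩ : ∃ r : Fin n → ℝ, r = fun i => (n : ℝ)⁻¹ * ∑ j, W j i := ⟨_, rfl⟩
  have hr_apply : ∀ i, r i = (n : ℝ)⁻¹ * ∑ j, W j i := fun i => by rw [hrdef]
  have hnR : (0 : ℝ) < n := by exact_mod_cast hn0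
  have hrpos : ∀ i, 0 < r i := by
    intro i
    rw [hr_apply i]
    apply mul_pos (inv_pos.2 hnR)
    exact Finset.sum_pos' (fun j _ => hW0 j i) ⟨i, Finset.mem_univ i, hW3 i⟩
  have hrK : r ∈ K := by
    refine ⟨fun i => (hrpos i).le, ?_, ?_⟩
    · have h1 : ∑ i, r i • Λ i = (n : ℝ)⁻¹ • ∑ i, ∑ j, W j i • Λ i := by
        rw [Finset.smul_sum]
        refine Finset.sum_congr rfl fun i _ => ?_
        rw [hr_apply i, mul_smul, Finset.sum_smul]
      rw [h1, Finset.sum_comm, Finset.sum_congr rfl fun j _ => hW2 j]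
      simp
    · have h1 : ∑ i, r i = (n : ℝ)⁻¹ * ∑ i, ∑ j, W j i := by
        rw [Finset.mul_sum]
        exact Finset.sum_congr rfl fun i _ => hr_apply i
      rw [h1, Finset.sum_comm, Finset.sum_congr rfl fun j _ => hW1 j]
      rw [Finset.sum_const, Finset.card_univ, Fintype.card_fin, nsmul_eq_mul, mul_one]
      exact inv_mul_cancel₀ (ne_of_gt hnR)
  -- the affine/vector span of range Λ is everything
  have hvtop : vectorSpan ℝ (Set.range Λ) = ⊤ := by
    have h1 : affineSpan ℝ (Set.range Λ) = ⊤ :=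
      le_antisymm le_top (htop ▸ affineSpan_mono ℝ hzs)
    rw [← direction_affineSpan, h1, AffineSubspace.direction_top]
  set L := auxL m n Λ with hLdef
  have hLsingle : ∀ i, (Λ i, (1 : ℝ)) ∈ LinearMap.range L := by
    intro i
    have e1 : ∑ k, Pi.single (M := fun _ => ℝ) i 1 k • Λ k = Λ i := by
      calc ∑ k, Pi.single (M := fun _ => ℝ) i 1 k • Λ k
          = ∑ k, (if k = i then Λ k else 0) :=
            Finset.sum_congr rfl fun k _ => by
              rw [Pi.single_apply]; split_ifs <;> simp
        _ = Λ i := by rw [Finset.sum_ite_eq' Finset.univ i Λ]; simp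
    have e2 : ∑ k, Pi.single (M := fun _ => ℝ) i 1 k = 1 := by
      simp [Finset.sum_pi_single]
    have e0 : L (Pi.single (M := fun _ => ℝ) i 1) = (Λ i, 1) := by
      rw [hLdef, auxL_apply, e1, e2]
    exact ⟨_, e0⟩
  have hrange : LinearMap.range L = ⊤ := by
    rw [eq_top_iff]
    rintro ⟨v, c⟩ -
    set i0 : Fin n := ⟨0, hn0⟩
    have hdiff : ∀ u : Fin m → ℂ,
        ((u, 0) : (Fin m → ℂ) × ℝ) ∈ LinearMap.range L := by
      intro u
      have hu : u ∈ Submodule.span ℝ ((fun x => x -ᵥ Λ i0) '' Set.range Λ) := by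
        rw [← vectorSpan_eq_span_vsub_set_right ℝ (Set.mem_range_self i0), hvtop]
        trivial
      have hmap := Submodule.mem_map_of_mem
        (f := LinearMap.inl ℝ (Fin m → ℂ) ℝ) hu
      rw [Submodule.map_span] at hmap
      have hsub : (LinearMap.inl ℝ (Fin m → ℂ) ℝ) ''
          ((fun x => x -ᵥ Λ i0) '' Set.range Λ) ⊆ (LinearMap.range L : Set _) := by
        rintro _ ⟨_, ⟨_, ⟨i, rfl⟩, rfl⟩, rfl⟩
        have he : (LinearMap.inl ℝ (Fin m → ℂ) ℝ) (Λ i -ᵥ Λ i0)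
            = (Λ i, (1 : ℝ)) - (Λ i0, 1) := by
          simp [vsub_eq_sub, Prod.ext_iff]
        rw [SetLike.mem_coe, he]
        exact Submodule.sub_mem _ (hLsingle i) (hLsingle i0)
      have : LinearMap.inl ℝ (Fin m → ℂ) ℝ u ∈ LinearMap.range L :=
        Submodule.span_le.2 hsub hmap
      simpa using this
    have h01 : ((0, 1) : (Fin m → ℂ) × ℝ) ∈ LinearMap.range L := by
      have h := Submodule.sub_mem _ (hLsingle i0) (hdiff (Λ i0))
      simpa using h
    have hvc : ((v, c) : (Fin m → ℂ) × ℝ) = (v, 0) + c • (0, 1) := by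
      simp [Prod.ext_iff]
    rw [hvc]
    exact Submodule.add_mem _ (hdiff v) (Submodule.smul_mem _ _ h01)
  -- the vector span of K is the kernel of L
  have hLK : ∀ v, v ∈ K → L v = (0, 1) := by
    intro v hv
    rw [hLdef, auxL_apply, hv.2.1, hv.2.2]
  have hker : vectorSpan ℝ K = LinearMap.ker L := by
    apply le_antisymm
    · rw [vectorSpan_def]
      apply Submodule.span_le.2
      rintro x hx
      rw [Set.mem_vsub] at hx
      obtain ⟨a, ha, c, hc, rfl⟩ := hx
      have : L (a - c) = 0 := by rw [map_sub, hLK a ha, hLK c hc, sub_self]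
      simpa [vsub_eq_sub] using this
    · intro v hv
      have hv' := LinearMap.mem_ker.1 hv
      rw [hLdef, auxL_apply, Prod.mk_eq_zero] at hv'
      obtain ⟨hv1, hv2⟩ := hv'
      obtain ⟨A, hA⟩ : ∃ A : ℝ, A = Finset.univ.inf' Finset.univ_nonempty r := ⟨_, rfl⟩
      obtain ⟨B, hB⟩ : ∃ B : ℝ,
          B = Finset.univ.sup' Finset.univ_nonempty (fun i => |v i|) := ⟨_, rfl⟩
      have hApos : 0 < A := by
        rw [hA, Finset.lt_inf'_iff]
        exact fun i _ => hrpos i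
      have hB0 : 0 ≤ B := by
        rw [hB]
        exact le_trans (abs_nonneg (v ⟨0, hn0⟩))
          (Finset.le_sup' (fun i => |v i|) (Finset.mem_univ ⟨0, hn0⟩))
      obtain ⟨ε, hε⟩ : ∃ ε : ℝ, ε = A / (B + 1) := ⟨_, rfl⟩
      have hεpos : 0 < ε := hε ▸ div_pos hApos (by linarith)
      have hεB : ε * B < A := by
        rw [hε, div_mul_eq_mul_div, div_lt_iff₀ (by linarith : (0:ℝ) < B + 1)]
        nlinarith
      have hmem2 : r + ε • v ∈ K := by
        simp only [hKdef, Set.mem_setOf_eq, Pi.add_apply, Pi.smul_apply, smul_eq_mul]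
        refine ⟨fun i => ?_, ?_, ?_⟩
        · have h1 : A ≤ r i := hA ▸ Finset.inf'_le _ (Finset.mem_univ i)
          have h2 : |v i| ≤ B := hB ▸ Finset.le_sup' (fun i => |v i|) (Finset.mem_univ i)
          have h3 : -(ε * B) ≤ ε * v i := by
            have t1 : ε * -|v i| ≤ ε * v i :=
              mul_le_mul_of_nonneg_left (neg_abs_le (v i)) hεpos.le
            have t2 : ε * |v i| ≤ ε * B := mul_le_mul_of_nonneg_left h2 hεpos.le
            calc -(ε * B) ≤ -(ε * |v i|) := neg_le_neg t2
              _ = ε * -|v i| := by ring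
              _ ≤ ε * v i := t1
          have h6 : A + -(ε * B) ≤ r i + ε * v i := add_le_add h1 h3
          have h7 : (0 : ℝ) ≤ A + -(ε * B) := by
            rw [← sub_eq_add_neg]
            exact sub_nonneg.2 hεB.le
          exact le_trans h7 h6
        · have h4 : ∑ i, (r i + ε * v i) • Λ i
              = ∑ i, r i • Λ i + ε • ∑ i, v i • Λ i := by
            rw [Finset.smul_sum, ← Finset.sum_add_distrib]
            refine Finset.sum_congr rfl fun i _ => ?_
            rw [add_smul, mul_smul ε (v i) (Λ i)]
          show ∑ i, (r i + ε * v i) • Λ i = 0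
          rw [h4, hrK.2.1, hv1, smul_zero, add_zero]
        · show ∑ i, (r i + ε * v i) = 1
          rw [Finset.sum_add_distrib, hrK.2.2, ← Finset.mul_sum, hv2, mul_zero, add_zero]
      have hvs : ε • v ∈ vectorSpan ℝ K := by
        have h := vsub_mem_vectorSpan ℝ hmem2 hrK
        simpa [vsub_eq_sub] using h
      have h := Submodule.smul_mem (vectorSpan ℝ K) ε⁻¹ hvs
      rwa [smul_smul, inv_mul_cancel₀ (ne_of_gt hεpos), one_smul] at h
  -- rank-nullity
  have hrank := LinearMap.finrank_range_add_finrank_ker L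
  rw [hrange, finrank_top] at hrank
  have hdom : finrank ℝ (Fin n → ℝ) = n := by simp
  have hcod : finrank ℝ ((Fin m → ℂ) × ℝ) = 2 * m + 1 := by
    rw [Module.finrank_prod, hfr, finrank_self]
  rw [hdom, hcod] at hrank
  rw [hker]
  omega
end

section
/- Let Λ = (Λ_1, …, Λ_n) in ℂ^m be admissible, and let I ⊆ {1,…,n}. The set K_I = {r ∈ K_Λ : r_i = 0 for i ∈ I, r_j > 0 for j ∉ I} is nonempty if and only if 0 belongs to the convex hull of {Λ_j : j ∉ I}. -/
open Finset

theorem stmt_9 (m n : ℕ) (Λ : Fin n → (Fin m → ℂ))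
    (hSiegel : (0 : Fin m → ℂ) ∈ convexHull ℝ (Set.range Λ))
    (hWH : ∀ J : Finset (Fin n), J.card ≤ 2 * m →
      (0 : Fin m → ℂ) ∉ convexHull ℝ (Λ '' J))
    (I : Set (Fin n)) :
    {r : Fin n → ℝ | (∀ i, 0 ≤ r i) ∧ ∑ i, r i • Λ i = 0 ∧ ∑ i, r i = 1 ∧
        (∀ i ∈ I, r i = 0) ∧ (∀ j ∉ I, 0 < r j)}.Nonempty ↔
      (0 : Fin m → ℂ) ∈ convexHull ℝ (Λ '' Iᶜ) := by
  classical
  have hdim : Module.finrank ℝ (Fin m → ℂ) = 2 * m := by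
    simp [Module.finrank_pi_fintype, Complex.finrank_real_complex, mul_comm]
  constructor
  · rintro ⟨r, hr0, hrΛ, hr1, hrI, -⟩
    set t : Finset (Fin n) := {i ∈ univ | i ∉ I} with ht
    have hsum : ∑ i ∈ t, r i = 1 := by
      rw [← hr1]
      exact Finset.sum_subset (subset_univ t)
        (fun i _ hi => hrI i (by simpa [ht] using hi))
    have hsmul : ∑ i ∈ t, r i • Λ i = 0 := by
      rw [← hrΛ]
      exact Finset.sum_subset (subset_univ t)
        (fun i _ hi => by rw [hrI i (by simpa [ht] using hi), zero_smul])
    have hmass := Finset.centerMass_mem_convexHull t (w := r) (z := Λ)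
      (fun i _ => hr0 i) (by rw [hsum]; norm_num)
      (s := Λ '' Iᶜ) (fun i hi => ⟨i, by simpa [ht] using hi, rfl⟩)
    rwa [Finset.centerMass_eq_of_sum_1 _ _ hsum, hsmul] at hmass
  · intro h0
    obtain ⟨ι, hfι, z, c, hzr, hzi, hcpos, hcsum, hczero⟩ :=
      eq_pos_convex_span_of_mem_convexHull h0
    letI := hfι
    have hσ : ∀ i : ι, ∃ j : Fin n, j ∉ I ∧ Λ j = z i := by
      intro i
      obtain ⟨j, hj, hje⟩ := hzr ⟨i, rfl⟩
      exact ⟨j, hj, hje⟩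
    choose σ hσI hσΛ using hσ
    have hσinj : Function.Injective σ := fun i i' h =>
      hzi.injective (by rw [← hσΛ, ← hσΛ, h])
    have hbig : 2 * m < Fintype.card ι := by
      by_contra h
      push_neg at h
      refine hWH (univ.image σ) (le_trans (card_image_le.trans (by simp)) h) ?_
      have h00 : (0 : Fin m → ℂ) = Finset.univ.centerMass c z := by
        rw [Finset.centerMass_eq_of_sum_1 _ _ hcsum, hczero]
      rw [h00]
      exact Finset.centerMass_mem_convexHull _ (fun i _ => (hcpos i).le)
        (by rw [hcsum]; norm_num)
        (fun i _ => ⟨σ i, by simp, hσΛ i⟩)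
    have hvec : Module.finrank ℝ (vectorSpan ℝ (Set.range z)) ≤ 2 * m :=
      hdim ▸ Submodule.finrank_le _
    have hcard : Fintype.card ι = 2 * m + 1 :=
      le_antisymm (le_trans hzi.card_le_finrank_succ (by omega)) hbig
    have hspan : affineSpan ℝ (Set.range z) = ⊤ :=
      hzi.affineSpan_eq_top_iff_card_eq_finrank_add_one.mpr (by rw [hcard, hdim])
    have hι : Nonempty ι := Fintype.card_pos_iff.mp (by omega)
    have key : ∀ j0 : Fin n, j0 ∉ I → ∃ w : Fin n → ℝ, (∀ i, 0 ≤ w i) ∧ ∑ i, w i = 1 ∧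
        ∑ i, w i • Λ i = 0 ∧ (∀ i ∈ I, w i = 0) ∧ 0 < w j0 := by
      intro j0 hj0
      obtain ⟨a, hasum, haeq⟩ := eq_affineCombination_of_mem_affineSpan_of_fintype
        (k := ℝ) (p := z) (p1 := Λ j0) (by rw [hspan]; trivial)
      rw [Finset.affineCombination_eq_linear_combination _ _ _ hasum] at haeq
      set δ : ℝ := univ.inf' univ_nonempty (fun i => c i / (1 + |a i|)) with hδ
      have hδpos : 0 < δ := by
        rw [hδ, Finset.lt_inf'_iff]
        exact fun i _ => div_pos (hcpos i) (by positivity)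
      have hlt : ∀ i : ι, δ * a i < c i := by
        intro i
        have h1 : δ ≤ c i / (1 + |a i|) := Finset.inf'_le _ (mem_univ i)
        calc δ * a i ≤ δ * |a i| := mul_le_mul_of_nonneg_left (le_abs_self _) hδpos.le
          _ ≤ (c i / (1 + |a i|)) * |a i| := mul_le_mul_of_nonneg_right h1 (abs_nonneg _)
          _ < c i := by
            rw [div_mul_eq_mul_div, div_lt_iff₀ (by positivity)]
            nlinarith [abs_nonneg (a i), hcpos i]
      refine ⟨fun j => (if j = j0 then δ else 0) +
          ∑ i ∈ univ.filter (fun i => σ i = j), (c i - δ * a i), ?_, ?_, ?_, ?_, ?_⟩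
      · intro j
        refine add_nonneg (by split_ifs <;> simp [hδpos.le])
          (Finset.sum_nonneg fun i _ => sub_nonneg.2 (hlt i).le)
      · rw [Finset.sum_add_distrib, Finset.sum_fiberwise]
        simp only [Finset.sum_ite_eq', mem_univ, if_pos]
        rw [Finset.sum_sub_distrib, hcsum, ← Finset.mul_sum, hasum]
        ring
      · have hfib : ∀ j, (∑ i ∈ univ.filter (fun i => σ i = j), (c i - δ * a i)) • Λ j
            = ∑ i ∈ univ.filter (fun i => σ i = j), (c i - δ * a i) • z i := by
          intro j
          rw [Finset.sum_smul]
          refine Finset.sum_congr rfl fun i hi => ?_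
          rw [show Λ j = z i from by rw [← hσΛ i, (Finset.mem_filter.1 hi).2]]
        simp only [add_smul, Finset.sum_add_distrib, hfib]
        rw [Finset.sum_fiberwise]
        have h1 : ∑ j, (if j = j0 then δ else 0) • Λ j = δ • Λ j0 := by
          rw [Finset.sum_eq_single j0]
          · simp
          · intro b _ hb; rw [if_neg hb, zero_smul]
          · simp
        have h2 : ∑ i, (c i - δ * a i) • z i = - (δ • Λ j0) := by
          simp only [sub_smul, mul_smul]
          rw [Finset.sum_sub_distrib, hczero, ← Finset.smul_sum, ← haeq, zero_sub]
        rw [h1, h2, add_neg_cancel]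
      · intro i hi
        have hij : i ≠ j0 := fun h => hj0 (h ▸ hi)
        show (if i = j0 then δ else 0) +
          ∑ x ∈ univ.filter (fun x => σ x = i), (c x - δ * a x) = 0
        rw [if_neg hij, Finset.sum_eq_zero, add_zero]
        intro x hx
        exact absurd ((Finset.mem_filter.1 hx).2 ▸ hi) (hσI x)
      · show 0 < (if j0 = j0 then δ else 0) +
          ∑ x ∈ univ.filter (fun x => σ x = j0), (c x - δ * a x)
        rw [if_pos rfl]
        exact add_pos_of_pos_of_nonneg hδpos
          (Finset.sum_nonneg fun i _ => sub_nonneg.2 (hlt i).le)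
    choose W hW0 hW1 hWΛ hWI hWpos using key
    set T : Finset (Fin n) := {j ∈ univ | j ∉ I} with hT
    have hmem : ∀ j0 : T, (j0 : Fin n) ∉ I := fun j0 => (Finset.mem_filter.1 j0.2).2
    have hTpos : 0 < T.card := by
      refine Finset.card_pos.2 ⟨σ (Classical.arbitrary ι), ?_⟩
      simp [hT, hσI]
    have hNpos : (0 : ℝ) < (T.card : ℝ) := by exact_mod_cast hTpos
    refine ⟨fun j => (T.card : ℝ)⁻¹ * ∑ j0 ∈ T.attach, W j0 (hmem j0) j, ?_, ?_, ?_, ?_, ?_⟩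
    · intro j
      exact mul_nonneg (inv_nonneg.2 hNpos.le)
        (Finset.sum_nonneg fun j0 _ => hW0 _ _ j)
    · simp only [mul_smul, ← Finset.smul_sum, Finset.sum_smul]
      rw [show ∑ j, ∑ j0 ∈ T.attach, W j0 (hmem j0) j • Λ j
          = ∑ j0 ∈ T.attach, ∑ j, W j0 (hmem j0) j • Λ j from Finset.sum_comm]
      simp only [hWΛ]
      simp
    · rw [← Finset.mul_sum, Finset.sum_comm]
      simp only [hW1]
      rw [Finset.sum_const, Finset.card_attach, nsmul_eq_mul, mul_one,
        inv_mul_cancel₀ hNpos.ne']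
    · intro i hi
      show (T.card : ℝ)⁻¹ * ∑ j0 ∈ T.attach, W j0 (hmem j0) i = 0
      rw [Finset.sum_eq_zero (fun j0 _ => hWI _ _ i hi), mul_zero]
    · intro j hj
      refine mul_pos (inv_pos.2 hNpos) (Finset.sum_pos' (fun j0 _ => hW0 _ _ j) ?_)
      have hjT : j ∈ T := by simp [hT, hj]
      exact ⟨⟨j, hjT⟩, Finset.mem_attach _ _, hWpos j (hmem ⟨j, hjT⟩)⟩
end

section
/- Let Λ = (Λ_1, …, Λ_n) in ℂ^m be admissible and suppose index i is dispensable, i.e., 0 lies in the convex hull of {Λ_j : j ≠ i}. Then there exists z in the transversal T_Λ = {z ≠ 0 : ∑ Λ_j |z_j|² = 0} with z_i = 0 and z_j ≠ 0 for all j ≠ i. -/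
open Finset

theorem stmt_18 (m n : ℕ) (Λ : Fin n → (Fin m → ℂ))
    (hSiegel : (0 : Fin m → ℂ) ∈ convexHull ℝ (Set.range Λ))
    (hWH : ∀ J : Finset (Fin n), J.card ≤ 2 * m →
      (0 : Fin m → ℂ) ∉ convexHull ℝ (Λ '' J))
    (i : Fin n)
    (hi : (0 : Fin m → ℂ) ∈ convexHull ℝ (Λ '' {j | j ≠ i})) :
    ∃ z : Fin n → ℂ, z ≠ 0 ∧ ∑ j, (‖z j‖ ^ 2 : ℝ) • Λ j = 0 ∧
      z i = 0 ∧ ∀ j, j ≠ i → z j ≠ 0 := by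
  classical
  -- the representation predicate
  set Rep : (Fin n → ℝ) → Prop := fun r =>
    (∀ j, 0 ≤ r j) ∧ r i = 0 ∧ ∑ j, r j = 1 ∧ ∑ j, r j • Λ j = 0 with hRepdef
  -- Step 1: there exists a representation
  have hex : ∃ r, Rep r := by
    obtain ⟨ι, hι, z, w, hz, -, hwpos, hw1, hwz⟩ := eq_pos_convex_span_of_mem_convexHull hi
    have hg : ∀ a : ι, ∃ b : Fin n, b ≠ i ∧ Λ b = z a := by
      intro a
      obtain ⟨b, hb1, hb2⟩ := hz (Set.mem_range_self a)
      exact ⟨b, hb1, hb2⟩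
    choose g hg1 hg2 using hg
    refine ⟨fun b => ∑ a ∈ univ.filter (fun a => g a = b), w a, fun j => ?_, ?_, ?_, ?_⟩
    · exact Finset.sum_nonneg fun a _ => (hwpos a).le
    · show ∑ a ∈ univ.filter (fun a => g a = i), w a = 0
      rw [Finset.filter_false_of_mem fun a _ => hg1 a, Finset.sum_empty]
    · show ∑ b, ∑ a ∈ univ.filter (fun a => g a = b), w a = 1
      rw [Finset.sum_fiberwise]; exact hw1
    · show ∑ b, (∑ a ∈ univ.filter (fun a => g a = b), w a) • Λ b = 0
      have key : ∀ b : Fin n,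
          (∑ a ∈ univ.filter (fun a => g a = b), w a) • Λ b
            = ∑ a ∈ univ.filter (fun a => g a = b), w a • Λ (g a) := by
        intro b
        rw [Finset.sum_smul]
        exact Finset.sum_congr rfl fun a ha => by rw [(Finset.mem_filter.1 ha).2]
      calc ∑ b, (∑ a ∈ univ.filter (fun a => g a = b), w a) • Λ b
          = ∑ b, ∑ a ∈ univ.filter (fun a => g a = b), w a • Λ (g a) :=
            Finset.sum_congr rfl fun b _ => key b
        _ = ∑ a, w a • Λ (g a) := Finset.sum_fiberwise _ _ _
        _ = ∑ a, w a • z a := Finset.sum_congr rfl fun a _ => by rw [hg2 a]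
        _ = 0 := hwz
  obtain ⟨r₀, hr₀⟩ := hex
  -- the support set
  set S : Finset (Fin n) := univ.filter (fun j => ∃ r, Rep r ∧ 0 < r j) with hSdef
  have hiS : i ∉ S := by
    simp only [hSdef, Finset.mem_filter, Finset.mem_univ, true_and]
    rintro ⟨r, hr, hpos⟩
    rw [hr.2.1] at hpos; exact lt_irrefl _ hpos
  have hSne : S.Nonempty := by
    have : ∃ j, r₀ j ≠ 0 := by
      by_contra h
      push_neg at h
      have := hr₀.2.2.1
      simp only [h, Finset.sum_const_zero] at this
      exact one_ne_zero this.symm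
    obtain ⟨j, hj⟩ := this
    refine ⟨j, ?_⟩
    simp only [hSdef, Finset.mem_filter, Finset.mem_univ, true_and]
    exact ⟨r₀, hr₀, (hr₀.1 j).lt_of_ne (Ne.symm hj)⟩
  -- choose representations with given positive coordinate
  have hch : ∀ j : Fin n, ∃ r, Rep r ∧ (j ∈ S → 0 < r j) := by
    intro j
    by_cases hj : j ∈ S
    · obtain ⟨r, hr, hpos⟩ := (Finset.mem_filter.1 hj).2
      exact ⟨r, hr, fun _ => hpos⟩
    · exact ⟨r₀, hr₀, fun h => absurd h hj⟩
  choose ρ hρ hρpos using hch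
  -- the averaged representation
  set rs : Fin n → ℝ := fun b => (S.card : ℝ)⁻¹ * ∑ j ∈ S, ρ j b with hrsdef
  have hcardpos : (0 : ℝ) < S.card := by exact_mod_cast Finset.card_pos.2 hSne
  have hrs_nonneg : ∀ b, 0 ≤ rs b := fun b =>
    mul_nonneg (inv_nonneg.2 hcardpos.le) (Finset.sum_nonneg fun j _ => (hρ j).1 b)
  have hrs_i : rs i = 0 := by
    simp only [hrsdef]
    rw [Finset.sum_congr rfl fun j _ => (hρ j).2.1, Finset.sum_const_zero, mul_zero]
  have hrs_sum : ∑ b, rs b = 1 := by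
    simp only [hrsdef]
    rw [← Finset.mul_sum, Finset.sum_comm]
    rw [Finset.sum_congr rfl fun j (_ : j ∈ S) => (hρ j).2.2.1]
    simp [Finset.sum_const, inv_mul_cancel₀ hcardpos.ne']
  have hrs_zero : ∑ b, rs b • Λ b = 0 := by
    have : ∀ b, rs b • Λ b = (S.card : ℝ)⁻¹ • ∑ j ∈ S, ρ j b • Λ b := by
      intro b
      simp only [hrsdef]
      rw [mul_smul, Finset.sum_smul]
    rw [Finset.sum_congr rfl fun b _ => this b, ← Finset.smul_sum, Finset.sum_comm]
    rw [Finset.sum_congr rfl fun j (_ : j ∈ S) => (hρ j).2.2.2]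
    simp
  have hrs_offS : ∀ b, b ∉ S → rs b = 0 := by
    intro b hb
    simp only [hrsdef]
    rw [Finset.sum_congr rfl fun j (_ : j ∈ S) => ?_, Finset.sum_const_zero, mul_zero]
    by_contra h
    exact hb (Finset.mem_filter.2 ⟨Finset.mem_univ b, ⟨ρ j, hρ j, ((hρ j).1 b).lt_of_ne (Ne.symm h)⟩⟩)
  have hrs_posS : ∀ j ∈ S, 0 < rs j := by
    intro j hj
    refine mul_pos (inv_pos.2 hcardpos) (Finset.sum_pos' (fun j' _ => (hρ j').1 j) ⟨j, hj, hρpos j hj⟩)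
  have hRep_rs : Rep rs := ⟨hrs_nonneg, hrs_i, hrs_sum, hrs_zero⟩
  -- Step 3: every k ≠ i lies in S
  have hall : ∀ k, k ≠ i → k ∈ S := by
    intro k hk
    by_contra hkS
    by_cases hspan : Λ k ∈ Submodule.span ℝ (Λ '' ↑S)
    · -- Case A: perturb to get a representation with positive k-coordinate
      have himg : Λ '' ↑S = Set.range (fun a : {x // x ∈ S} => Λ ↑a) := by
        ext x
        simp [Set.mem_image, Set.mem_range, Subtype.exists]
      rw [himg, Submodule.mem_span_range_iff_exists_fun] at hspan
      obtain ⟨c, hc⟩ := hspan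
      set c' : Fin n → ℝ := fun b => if h : b ∈ S then c ⟨b, h⟩ else 0 with hc'def
      have hc'sum : ∑ b, c' b • Λ b = Λ k := by
        calc ∑ b, c' b • Λ b
            = ∑ b ∈ S, c' b • Λ b := (Finset.sum_subset (Finset.subset_univ S)
              (fun x _ hx => by simp only [hc'def, dif_neg hx, zero_smul])).symm
          _ = ∑ a : {x // x ∈ S}, c' ↑a • Λ ↑a := (Finset.sum_coe_sort S (fun b => c' b • Λ b)).symm
          _ = ∑ a : {x // x ∈ S}, c a • Λ ↑a :=
              Finset.sum_congr rfl (fun a _ => by simp only [hc'def, dif_pos a.2])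
          _ = Λ k := hc
      have hc'off : ∀ b, b ∉ S → c' b = 0 := fun b hb => by simp only [hc'def, dif_neg hb]
      obtain ⟨j₀, hj₀S, hj₀min⟩ := S.exists_min_image rs hSne
      set δ : ℝ := rs j₀ with hδdef
      have hδpos : 0 < δ := hrs_posS j₀ hj₀S
      set C : ℝ := ∑ b, |c' b| with hCdef
      have hC0 : 0 ≤ C := Finset.sum_nonneg fun b _ => abs_nonneg _
      set ε : ℝ := δ / (1 + C) with hεdef
      have hεpos : 0 < ε := div_pos hδpos (by linarith)
      have hεb : ∀ b, ε * c' b < δ := by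
        intro b
        have h1 : c' b ≤ |c' b| := le_abs_self _
        have h2 : |c' b| ≤ C := Finset.single_le_sum (fun b _ => abs_nonneg (c' b)) (Finset.mem_univ b)
        have h3 : ε * (1 + C) = δ := div_mul_cancel₀ _ (by linarith)
        nlinarith
      set q : Fin n → ℝ := fun b => if b = k then ε else rs b - ε * c' b with hqdef
      have hq0 : ∀ b, 0 ≤ q b := by
        intro b
        simp only [hqdef]
        split
        · exact hεpos.le
        · by_cases hb : b ∈ S
          · have := hεb b
            have := hj₀min b hb
            linarith
          · rw [hrs_offS b hb, hc'off b hb]; simp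
      have hqk : q k = ε := by simp [hqdef]
      have hqeq : ∀ b, q b = (if b = k then ε else 0) + rs b - ε * c' b := by
        intro b
        by_cases hb : b = k
        · subst hb
          rw [hqk, if_pos rfl, hrs_offS b hkS, hc'off b hkS]
          ring
        · simp only [hqdef, if_neg hb]
          ring
      have e1 : ∑ b, (if b = k then ε else 0) • Λ b = ε • Λ k := by
        have h1 : ∀ b : Fin n, (if b = k then ε else 0) • Λ b
            = (if b = k then ε • Λ b else 0) := by
          intro b
          by_cases hb : b = k <;> simp [hb]
        rw [Finset.sum_congr rfl fun b _ => h1 b,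
          Finset.sum_ite_eq' univ k (fun b => ε • Λ b), if_pos (Finset.mem_univ k)]
      have e3 : ∑ b, (ε * c' b) • Λ b = ε • Λ k := by
        have h3 : ∀ b : Fin n, (ε * c' b) • Λ b = ε • (c' b • Λ b) :=
          fun b => mul_smul ε (c' b) (Λ b)
        rw [Finset.sum_congr rfl fun b _ => h3 b, ← Finset.smul_sum, hc'sum]
      have hqsum0 : ∑ b, q b • Λ b = 0 := by
        have e : ∀ b : Fin n, q b • Λ b
            = (if b = k then ε else 0) • Λ b + rs b • Λ b - (ε * c' b) • Λ b := by
          intro b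
          rw [hqeq b, sub_smul, add_smul]
        rw [Finset.sum_congr rfl fun b _ => e b, Finset.sum_sub_distrib,
          Finset.sum_add_distrib, e1, hrs_zero, e3]
        simp
      set W : ℝ := ∑ b, q b with hWdef
      have hWpos : 0 < W := Finset.sum_pos' (fun b _ => hq0 b) ⟨k, Finset.mem_univ k, by rw [hqk]; exact hεpos⟩
      have hkmem : k ∈ S := by
        refine Finset.mem_filter.2 ⟨Finset.mem_univ k, ⟨fun b => q b / W, ⟨?_, ?_, ?_, ?_⟩, ?_⟩⟩
        · exact fun b => div_nonneg (hq0 b) hWpos.le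
        · show q i / W = 0
          have hqi : q i = 0 := by
            have hik : i ≠ k := Ne.symm hk
            simp only [hqdef, if_neg hik, hrs_i, hc'off i hiS]
            ring
          rw [hqi, zero_div]
        · rw [← Finset.sum_div, div_self hWpos.ne']
        · have : ∀ b, (q b / W) • Λ b = W⁻¹ • (q b • Λ b) := by
            intro b
            rw [div_eq_inv_mul, mul_smul]
          rw [Finset.sum_congr rfl fun b _ => this b, ← Finset.smul_sum, hqsum0, smul_zero]
        · show 0 < q k / W
          rw [hqk]; exact div_pos hεpos hWpos
      exact hkS hkmem
    · -- Case B: support lies in a proper subspace; Caratheodory contradicts hWH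
      set V : Submodule ℝ (Fin m → ℂ) := Submodule.span ℝ (Λ '' ↑S) with hVdef
      have hVlt : V < ⊤ := lt_top_iff_ne_top.2 fun h => hspan (h ▸ Submodule.mem_top)
      have hfrE : Module.finrank ℝ (Fin m → ℂ) = 2 * m := by
        rw [Module.finrank_pi_fintype ℝ]
        simp [Complex.finrank_real_complex, Finset.sum_const, mul_comm]
      have hfrV : Module.finrank ℝ V < 2 * m := hfrE ▸ Submodule.finrank_lt hVlt.ne
      have h0S : (0 : Fin m → ℂ) ∈ convexHull ℝ (Λ '' ↑S) := by
        have hsum1 : ∑ b ∈ S, rs b = 1 := by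
          rw [Finset.sum_subset (Finset.subset_univ S) (fun b _ hb => hrs_offS b hb)]
          exact hrs_sum
        have := Finset.centerMass_mem_convexHull S (fun b _ => hrs_nonneg b)
          (by rw [hsum1]; norm_num) (fun b hb => Set.mem_image_of_mem Λ (Finset.mem_coe.2 hb))
        rwa [Finset.centerMass_eq_of_sum_1 _ _ hsum1,
          Finset.sum_subset (Finset.subset_univ S) (fun b _ hb => by rw [hrs_offS b hb, zero_smul]),
          hrs_zero] at this
      obtain ⟨ι, hι, z, w, hz, hai, hwpos, hw1, hwz⟩ := eq_pos_convex_span_of_mem_convexHull h0S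
      have hιne : Nonempty ι := by
        by_contra h
        rw [not_nonempty_iff] at h
        rw [Finset.univ_eq_empty, Finset.sum_empty] at hw1
        exact one_ne_zero hw1.symm
      have hcard : Fintype.card ι = (Fintype.card ι - 1) + 1 :=
        (Nat.succ_pred_eq_of_pos (Fintype.card_pos_iff.2 hιne)).symm
      have hfr : Module.finrank ℝ (vectorSpan ℝ (Set.range z)) = Fintype.card ι - 1 :=
        hai.finrank_vectorSpan hcard
      have hle : vectorSpan ℝ (Set.range z) ≤ V := by
        rw [vectorSpan_def]
        rw [Submodule.span_le]
        rintro x ⟨x1, hx1, x2, hx2, rfl⟩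
        exact sub_mem (Submodule.subset_span (hz hx1)) (Submodule.subset_span (hz hx2))
      have hcard2m : Fintype.card ι ≤ 2 * m := by
        have h1 : Module.finrank ℝ (vectorSpan ℝ (Set.range z)) ≤ Module.finrank ℝ V :=
          Submodule.finrank_mono hle
        omega
      have hg : ∀ a : ι, ∃ b : Fin n, b ∈ S ∧ Λ b = z a := by
        intro a
        obtain ⟨b, hb1, hb2⟩ := hz (Set.mem_range_self a)
        exact ⟨b, Finset.mem_coe.1 hb1, hb2⟩
      choose g hg1 hg2 using hg
      set J : Finset (Fin n) := univ.image g with hJdef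
      have hJcard : J.card ≤ 2 * m := by
        calc J.card ≤ (univ : Finset ι).card := Finset.card_image_le
          _ = Fintype.card ι := Finset.card_univ
          _ ≤ 2 * m := hcard2m
      have h0J : (0 : Fin m → ℂ) ∈ convexHull ℝ (Λ '' ↑J) := by
        have := Finset.centerMass_mem_convexHull (univ : Finset ι)
          (fun a _ => (hwpos a).le) (by rw [hw1]; norm_num)
          (z := fun a => Λ (g a))
          (fun a _ => Set.mem_image_of_mem Λ (Finset.mem_coe.2 (Finset.mem_image_of_mem g (Finset.mem_univ a))))
        rwa [Finset.centerMass_eq_of_sum_1 _ _ hw1,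
          Finset.sum_congr rfl (fun a _ => by rw [hg2 a]), hwz] at this
      exact hWH J hJcard h0J
  -- Step 4: construct z
  refine ⟨fun j => (Real.sqrt (rs j) : ℂ), ?_, ?_, ?_, ?_⟩
  · obtain ⟨j₁, hj₁⟩ := hSne
    have hj₁i : j₁ ≠ i := fun h => hiS (h ▸ hj₁)
    intro h
    have h2 : (↑(Real.sqrt (rs j₁)) : ℂ) = 0 := congrFun h j₁
    rw [Complex.ofReal_eq_zero] at h2
    have hpos := hrs_posS j₁ hj₁
    exact hpos.ne' ((Real.sqrt_eq_zero hpos.le).1 h2)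
  · have : ∀ j, (‖((Real.sqrt (rs j) : ℂ))‖ ^ 2 : ℝ) = rs j := by
      intro j
      rw [Complex.norm_real, Real.norm_eq_abs, abs_of_nonneg (Real.sqrt_nonneg _), Real.sq_sqrt (hrs_nonneg j)]
    rw [Finset.sum_congr rfl fun j _ => by rw [this j]]
    exact hrs_zero
  · show (↑(Real.sqrt (rs i)) : ℂ) = 0
    rw [hrs_i]; simp
  · intro j hj
    have hpos := hrs_posS j (hall j hj)
    show (↑(Real.sqrt (rs j)) : ℂ) ≠ 0
    intro h
    rw [Complex.ofReal_eq_zero] at h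
    exact hpos.ne' ((Real.sqrt_eq_zero hpos.le).1 h)
end
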